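/- Every finitely generated torsion-free nilpotent group is left-orderable (indeed bi-orderable). -/

import Mathlib

/-- A monoid is torsion-free if no element except `1` has finite order
(the definition `Monoid.IsTorsionFree` of the older Mathlib, since removed). -/
def Monoid.IsTorsionFree (G : Type*) [Monoid G] : Prop :=
  ∀ g : G, g ≠ 1 → ¬IsOfFinOrder g

universe u
open Monoid Subgroup



/-- Levi: every abelian group admits an additive map to a linearly ordered abelian group
whose kernel is exactly the torsion elements. -/
theorem exists_orderHom_ker_torsion (H : Type u) [CommGroup H] :
    ∃ (L : Type u) (_i : AddCommGroup L) (_o : LinearOrder L) (_m : IsOrderedAddMonoid L) (φ : H → L),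
      (∀ a b, φ (a * b) = φ a + φ b) ∧ (∀ a, φ a = 0 ↔ IsOfFinOrder a) := by
  classical
  let H' := H ⧸ CommGroup.torsion H
  let π : H →* H' := QuotientGroup.mk' _
  have hπker : ∀ a : H, π a = 1 ↔ IsOfFinOrder a := by
    intro a
    rw [QuotientGroup.mk'_apply, QuotientGroup.eq_one_iff]
    exact Iff.rfl
  have htf : Monoid.IsTorsionFree H' := fun a ha => not_isOfFinOrder_of_isMulTorsionFree ha
  let M := Additive H'
  have htfM : IsAddTorsionFree M := isAddTorsionFree_iff_not_isOfFinAddOrder.mpr (fun a ha hfin => htf a.toMul ha hfin)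
  haveI : NoZeroSMulDivisors ℤ M := IsAddTorsionFree.to_noZeroSMulDivisors_int
  let S := nonZeroDivisors ℤ
  let W := LocalizedModule S M
  let f : M →ₗ[ℤ] W := LocalizedModule.mkLinearMap S M
  have hf : Function.Injective f := by
    rw [← LinearMap.ker_eq_bot, eq_bot_iff]
    intro m hm
    obtain ⟨r, hrS, hr⟩ := LocalizedModule.mem_ker_mkLinearMap_iff.mp hm
    have : r ≠ 0 := nonZeroDivisors.ne_zero hrS
    simpa [smul_eq_zero, this] using hr
  letI K := Localization S
  letI : Field K := FractionRing.field (A := ℤ)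
  letI : Module K W := inferInstanceAs (Module (Localization S) (LocalizedModule S M))
  let b := Module.Basis.ofVectorSpace K W
  let ι := Module.Basis.ofVectorSpaceIndex K W
  letI : LinearOrder ι := @linearOrderOfSTO ι WellOrderingRel ⟨⟩ (Classical.decRel _)
  let e : K ≃ₐ[ℤ] ℚ := FractionRing.algEquiv ℤ ℚ
  letI : IsOrderedAddMonoid (Lex (↑ι →₀ ℚ)) := inferInstance
  let ψ : W → Lex (↑ι →₀ ℚ) := fun w => toLex ((b.repr w).mapRange e (map_zero e))
  have hψadd : ∀ w₁ w₂, ψ (w₁ + w₂) = ψ w₁ + ψ w₂ := by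
    intro w₁ w₂
    show toLex _ = toLex _ + toLex _
    rw [map_add, Finsupp.mapRange_add (fun a c => map_add e a c)]
    rfl
  have hψinj : ∀ w, ψ w = 0 → w = 0 := by
    intro w hw
    have h2 : ((b.repr w).mapRange e (map_zero e)) = 0 := hw
    have h3 : b.repr w = 0 := by
      ext i
      have := DFunLike.congr_fun h2 i
      simpa using this
    simpa using b.repr.injective (by simpa using h3)
  refine ⟨Lex (↑ι →₀ ℚ), inferInstance, inferInstance, inferInstance, fun a => ψ (f (Additive.ofMul (π a))), ?_, ?_⟩
  · intro a c
    show ψ (f (Additive.ofMul (π (a * c)))) = ψ (f (Additive.ofMul (π a))) + ψ (f (Additive.ofMul (π c)))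
    rw [map_mul π a c]
    have : Additive.ofMul (π a * π c) = Additive.ofMul (π a) + Additive.ofMul (π c) := rfl
    rw [this, map_add]
    exact hψadd _ _
  · intro a
    rw [← hπker a]
    constructor
    · intro h
      have h4 : f (Additive.ofMul (π a)) = 0 := hψinj _ h
      have h5 : Additive.ofMul (π a) = 0 := hf (by simpa using h4)
      exact h5
    · intro h
      have h0 : Additive.ofMul (π a) = 0 := by
        rw [h]; rfl
      show ψ (f (Additive.ofMul (π a))) = 0
      rw [h0, map_zero]
      show toLex _ = 0
      rw [map_zero]
      simp



theorem finite_closure_finset {H : Type u} [CommGroup H] (ht : ∀ a : H, IsOfFinOrder a)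
    (S : Finset H) : ((Subgroup.closure (S : Set H) : Subgroup H) : Set H).Finite := by
  classical
  induction S using Finset.induction_on with
  | empty =>
    simp only [Finset.coe_empty, Subgroup.closure_empty]
    exact (Set.finite_singleton (1 : H)).subset (by
      intro x hx
      simpa using hx)
  | @insert a S ha ih =>
    have hins : (insert a S : Finset H) = ({a} ∪ S : Finset H) := by
      ext x; simp
    rw [hins]
    push_cast
    rw [Subgroup.closure_union, ← Subgroup.zpowers_eq_closure]
    have hz : ((Subgroup.zpowers a : Subgroup H) : Set H).Finite :=
      finite_zpowers.mpr (ht a)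
    have : ((Subgroup.zpowers a ⊔ Subgroup.closure (S : Set H) : Subgroup H) : Set H)
        ⊆ Set.image2 (· * ·) (Subgroup.zpowers a : Set H)
          ((Subgroup.closure (S : Set H) : Subgroup H) : Set H) := by
      intro x hx
      obtain ⟨y, hy, z, hz', rfl⟩ := Subgroup.mem_sup.mp hx
      exact Set.mem_image2_of_mem hy hz'
    exact (Set.Finite.image2 _ hz ih).subset this

/-- A finitely generated torsion abelian group is finite. -/
theorem finite_of_fg_torsion_comm (H : Type u) [CommGroup H] (hfg : Group.FG H)
    (ht : ∀ a : H, IsOfFinOrder a) : Finite H := by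
  obtain ⟨n, S, -, hS⟩ := (Group.fg_iff' (G := H)).mp hfg
  have := finite_closure_finset ht S
  rw [hS] at this
  exact Set.finite_coe_iff.mpr (this.subset (by intro x _; trivial)) |> fun h => by
    have : Finite ((⊤ : Subgroup H) : Set H) := h
    exact Finite.of_surjective (fun x : ((⊤ : Subgroup H) : Set H) => (x : H))
      (fun y => ⟨⟨y, trivial⟩, rfl⟩)

/-- A finitely generated torsion nilpotent group is finite. -/
theorem finite_of_fg_torsion_nilpotent :
    ∀ (n : ℕ) (G : Type u) [Group G] [Group.IsNilpotent G],
      Group.nilpotencyClass G ≤ n → Group.FG G → (∀ a : G, IsOfFinOrder a) → Finite G := by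
  intro n
  induction n with
  | zero =>
    intro G _ _ hcl _ _
    have : Subsingleton G := nilpotencyClass_zero_iff_subsingleton.mp (Nat.le_zero.mp hcl)
    exact Finite.of_subsingleton
  | succ n ih =>
    intro G _ _ hcl hfg ht
    let Q := G ⧸ center G
    have hQcl : Group.nilpotencyClass Q ≤ n := by
      rw [nilpotencyClass_quotient_center]
      omega
    have hQfg : Group.FG Q := Group.fg_of_surjective (f := QuotientGroup.mk' (center G))
      (QuotientGroup.mk'_surjective _)
    have hQt : ∀ a : Q, IsOfFinOrder a := by
      intro a
      induction a using QuotientGroup.induction_on with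
      | H g => exact (QuotientGroup.mk' (center G)).isOfFinOrder (ht g)
    have hQfin : Finite Q := ih Q hQcl hQfg hQt
    haveI : Subgroup.FiniteIndex (center G) := Subgroup.finiteIndex_of_finite_quotient (H := center G)
    haveI : Group.FG G := hfg
    haveI hcfg : Group.FG (center G) := Subgroup.fg_of_index_ne_zero _
    have hcfin : Finite (center G) := by
      letI : CommGroup (center G) := { (center G).toGroup with
        mul_comm := fun a b => Subtype.ext (Subgroup.mem_center_iff.mp b.2 a) }
      apply finite_of_fg_torsion_comm _ hcfg
      intro a
      exact Submonoid.isOfFinOrder_coe.mp (ht (a : G))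
    exact Finite.of_equiv _ (Subgroup.groupEquivQuotientProdSubgroup (s := center G)).symm



/-- Key transfer lemma: if `u`,`v` map into a torsion subgroup of `G ⧸ center G`
then a common positive power of `u*v` splits as commuting central-ish powers. -/
theorem exists_pow_mul_eq {G : Type u} [Group G] [Group.IsNilpotent G] (u v : G)
    (T : Subgroup (G ⧸ Subgroup.center G)) (hTt : ∀ x ∈ T, IsOfFinOrder x)
    (hu : ((u : G ⧸ Subgroup.center G) ∈ T)) (hv : ((v : G ⧸ Subgroup.center G) ∈ T)) :
    ∃ N : ℕ, 0 < N ∧ (u * v) ^ N = u ^ N * v ^ N ∧ Commute (u ^ N) (v ^ N) := by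
  classical
  set Q := G ⧸ Subgroup.center G with hQ
  let π : G →* Q := QuotientGroup.mk' (Subgroup.center G)
  let H : Subgroup G := Subgroup.closure {u, v}
  have huH : u ∈ H := Subgroup.subset_closure (by simp)
  have hvH : v ∈ H := Subgroup.subset_closure (by simp)
  let J : Subgroup Q := Subgroup.map π H
  -- J is finite
  have hJle : J ≤ T := by
    rw [Subgroup.map_le_iff_le_comap]
    apply Subgroup.closure_le _ |>.mpr
    intro x hx
    rcases hx with rfl | hx
    · exact hu
    · simp only [Set.mem_singleton_iff] at hx; subst hx; exact hv
  have hJfg : Group.FG J := by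
    rw [Group.fg_iff_subgroup_fg]
    refine (Subgroup.fg_iff J).mpr ⟨π '' {u, v}, ?_, Set.Finite.image π (Set.toFinite _)⟩
    rw [← MonoidHom.map_closure]
  have hJt : ∀ x : J, IsOfFinOrder x := by
    intro x
    have : IsOfFinOrder (x : Q) := hTt _ (hJle x.2)
    exact Submonoid.isOfFinOrder_coe.mp this
  have hJfin : Finite J :=
    finite_of_fg_torsion_nilpotent (Group.nilpotencyClass J) J le_rfl hJfg hJt
  -- the center of H has finite index
  let ρ : H →* Q := π.comp H.subtype
  have hρ : ∀ h : H, ρ h ∈ J := fun h => Subgroup.mem_map_of_mem π h.2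
  let φ : H →* J := ρ.codRestrict J hρ
  have hker : φ.ker ≤ Subgroup.center H := by
    intro h hh
    have h1 : ρ h = 1 := by
      have h0 : φ h = 1 := hh
      have := congrArg (Subgroup.subtype J) h0
      simp only [map_one] at this
      exact this
    have h2 : (h : G) ∈ Subgroup.center G := (QuotientGroup.eq_one_iff _).mp h1
    rw [Subgroup.mem_center_iff]
    intro g
    exact Subtype.ext ((Subgroup.mem_center_iff.mp h2) g)
  have hfin1 : Finite (H ⧸ φ.ker) := by
    have hr : Finite φ.range := Subtype.finite
    exact Finite.of_equiv _ (QuotientGroup.quotientKerEquivRange φ).symm.toEquiv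
  have hfin2 : Finite (H ⧸ Subgroup.center H) := by
    have hsurj : Function.Surjective
        (QuotientGroup.map φ.ker (Subgroup.center H) (MonoidHom.id H) (by
          intro x hx
          exact hker hx)) := by
      intro x
      induction x using QuotientGroup.induction_on with
      | H g => exact ⟨QuotientGroup.mk g, rfl⟩
    exact Finite.of_surjective _ hsurj
  haveI : Subgroup.FiniteIndex (Subgroup.center H) :=
    Subgroup.finiteIndex_of_finite_quotient
  -- the transfer
  let ψ := MonoidHom.transferCenterPow H
  set N := (Subgroup.center H).index with hN
  have hNpos : 0 < N := Nat.pos_of_ne_zero (Subgroup.FiniteIndex.index_ne_zero)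
  let U : H := ⟨u, huH⟩
  let V : H := ⟨v, hvH⟩
  have h1 : ((ψ (U * V) : H) : G) = ((ψ U : H) : G) * ((ψ V : H) : G) := by
    rw [map_mul]
    rfl
  have happ : ∀ x : H, ((ψ x : H) : G) = ((x : G)) ^ N := by
    intro x
    have := MonoidHom.transferCenterPow_apply (G := H) x
    rw [this]
    push_cast
    rfl
  refine ⟨N, hNpos, ?_, ?_⟩
  · have := h1
    rw [happ, happ, happ] at this
    simpa using this
  · have hc : Commute (U ^ N) (V ^ N) := by
      have hU : (U ^ N : H) = (ψ U : H) := by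
        apply Subtype.ext
        rw [happ U]
        push_cast
        rfl
      rw [hU]
      exact ((Subgroup.mem_center_iff.mp (ψ U).2) (V ^ N)).symm
    have := congrArg (fun x : H => (x : G)) (hc : U ^ N * V ^ N = V ^ N * U ^ N)
    simpa [Commute, SemiconjBy] using this



def GoodOrder (G : Type u) [Group G] : Prop :=
  ∃ pos : G → Prop,
    (∀ a b, pos a → pos b → pos (a * b)) ∧
    (∀ a b, pos a → pos (b * a * b⁻¹)) ∧
    (∀ a, pos a → ¬ IsOfFinOrder a) ∧
    (∀ a, pos a → ¬ pos a⁻¹) ∧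
    (∀ a, pos a ∨ pos a⁻¹ ∨ IsOfFinOrder a) ∧
    (∀ a b : G, IsOfFinOrder a → IsOfFinOrder b → IsOfFinOrder (a * b))

theorem goodOrder_of_nilpotent :
    ∀ (n : ℕ) (G : Type u) [Group G] [Group.IsNilpotent G],
      Group.nilpotencyClass G ≤ n → GoodOrder G := by
  intro n
  induction n with
  | zero =>
    intro G _ _ hcl
    have hs : Subsingleton G := nilpotencyClass_zero_iff_subsingleton.mp (Nat.le_zero.mp hcl)
    have hfin : ∀ a : G, IsOfFinOrder a := fun a => (Subsingleton.elim a 1) ▸ IsOfFinOrder.one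
    exact ⟨fun _ => False, by simp, by simp, by simp, by simp,
      fun a => Or.inr (Or.inr (hfin a)), fun a b _ _ => hfin _⟩
  | succ n ih =>
    intro G _ _ hcl
    have hQcl : Group.nilpotencyClass (G ⧸ center G) ≤ n := by
      have := nilpotencyClass_quotient_center (G := G)
      omega
    obtain ⟨posQ, qmul, qconj, qfin, qasym, qtot, qtor⟩ := ih (G ⧸ center G) hQcl
    letI : CommGroup (center G) := { (center G).toGroup with
      mul_comm := fun a b => Subtype.ext (Subgroup.mem_center_iff.mp b.2 a) }
    obtain ⟨L, _iL, _iO, _iM, φ, φmul, φker⟩ := exists_orderHom_ker_torsion (↥(center G))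
    let π : G →* (G ⧸ center G) := QuotientGroup.mk' (center G)
    -- basic φ facts
    have φone : φ 1 = 0 := by
      have := φmul 1 1
      rw [mul_one] at this
      exact (left_eq_add.mp this)
    have φpow : ∀ (z : ↥(center G)) (k : ℕ), φ (z ^ k) = k • φ z := by
      intro z k
      induction k with
      | zero => simpa using φone
      | succ k ihk => rw [pow_succ, φmul, ihk, succ_nsmul]
    have φinv : ∀ z : ↥(center G), φ z⁻¹ = -φ z := by
      intro z
      have h := φmul z z⁻¹
      rw [mul_inv_cancel, φone] at h
      exact (neg_eq_of_add_eq_zero_right h.symm).symm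
    -- torsion subgroup of (G ⧸ center G)
    let T : Subgroup (G ⧸ center G) := {
      carrier := {x | IsOfFinOrder x}
      one_mem' := IsOfFinOrder.one
      mul_mem' := fun {a b} ha hb => qtor a b ha hb
      inv_mem' := fun {a} ha => ha.inv }
    have hTt : ∀ x ∈ T, IsOfFinOrder x := fun x hx => hx
    -- positivity-with-torsion helpers on (G ⧸ center G)
    have posfinR : ∀ x t : (G ⧸ center G), posQ x → IsOfFinOrder t → posQ (x * t) := by
      intro x t hx ht
      rcases qtot (x * t) with h | h | h
      · exact h
      · exfalso
        have h1 : (x * t)⁻¹ = t⁻¹ * x⁻¹ := by group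
        rw [h1] at h
        have h2 := qmul _ _ h hx
        have h3 : t⁻¹ * x⁻¹ * x = t⁻¹ := by group
        rw [h3] at h2
        exact qfin _ h2 ht.inv
      · exfalso
        have : IsOfFinOrder x := by
          have := qtor _ _ h ht.inv
          rwa [mul_assoc, mul_inv_cancel, mul_one] at this
        exact qfin _ hx this
    have posfinL : ∀ t x : (G ⧸ center G), IsOfFinOrder t → posQ x → posQ (t * x) := by
      intro t x ht hx
      have h1 : t * x = x * (x⁻¹ * t * x) := by group
      have h2 : IsOfFinOrder (x⁻¹ * t * x) := by
        have h3 : x⁻¹ * t * x = x⁻¹ * t * x⁻¹⁻¹ := by group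
        rcases ht.exists_pow_eq_one with ⟨m, hm, hmeq⟩
        refine isOfFinOrder_iff_pow_eq_one.mpr ⟨m, hm, ?_⟩
        rw [h3, conj_pow, hmeq]
        group
      rw [h1]
      exact posfinR _ _ hx h2
    -- the positivity predicate on G
    let pos : G → Prop := fun g =>
      posQ (π g) ∨ ∃ k : ℕ, 0 < k ∧ ∃ h : g ^ k ∈ (center G), 0 < φ ⟨g ^ k, h⟩
    -- torsion transfer facts
    have πfin : ∀ g : G, ∀ k : ℕ, 0 < k → g ^ k ∈ (center G) → IsOfFinOrder (π g) := by
      intro g k hk h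
      refine isOfFinOrder_iff_pow_eq_one.mpr ⟨k, hk, ?_⟩
      rw [← map_pow]
      exact (QuotientGroup.eq_one_iff _).mpr h
    -- the six axioms
    refine ⟨pos, ?_, ?_, ?_, ?_, ?_, ?_⟩
    · -- multiplication
      rintro u v (hu | ⟨k1, hk1, hu1, hφu⟩) (hv | ⟨k2, hk2, hv1, hφv⟩)
      · exact Or.inl (by rw [map_mul]; exact qmul _ _ hu hv)
      · refine Or.inl ?_
        rw [map_mul]
        exact posfinR _ _ hu (πfin v k2 hk2 hv1)
      · refine Or.inl ?_
        rw [map_mul]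
        exact posfinL _ _ (πfin u k1 hk1 hu1) hv
      · -- both have central powers: the transfer argument
        refine Or.inr ?_
        have hTu : (π u) ∈ T := πfin u k1 hk1 hu1
        have hTv : (π v) ∈ T := πfin v k2 hk2 hv1
        obtain ⟨N, hN, hsplit, hcomm⟩ := exists_pow_mul_eq u v T hTt hTu hTv
        have hTuv : IsOfFinOrder (π (u * v)) := by
          rw [map_mul]; exact qtor _ _ hTu hTv
        obtain ⟨k3, hk3, hk3eq⟩ := hTuv.exists_pow_eq_one
        have hw : (u * v) ^ k3 ∈ (center G) := by
          have h5 := hk3eq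
          rw [← map_pow] at h5
          exact (QuotientGroup.eq_one_iff _).mp h5
        refine ⟨k3, hk3, hw, ?_⟩
        -- identity: ((u*v)^k3) ^ (N*k1*k2) = (u^k1)^(N*k2*k3) * (v^k2)^(N*k1*k3)
        have e1 : (u * v) ^ (N * (k1 * k2 * k3)) =
            u ^ (N * (k1 * k2 * k3)) * v ^ (N * (k1 * k2 * k3)) := by
          rw [pow_mul, hsplit, hcomm.mul_pow, ← pow_mul, ← pow_mul]
        have e2 : ((u * v) ^ k3) ^ (N * (k1 * k2)) = (u ^ k1) ^ (N * (k2 * k3)) *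
            (v ^ k2) ^ (N * (k1 * k3)) := by
          rw [← pow_mul, ← pow_mul, ← pow_mul]
          calc (u * v) ^ (k3 * (N * (k1 * k2))) = (u * v) ^ (N * (k1 * k2 * k3)) := by ring_nf
            _ = u ^ (N * (k1 * k2 * k3)) * v ^ (N * (k1 * k2 * k3)) := e1
            _ = u ^ (k1 * (N * (k2 * k3))) * v ^ (k2 * (N * (k1 * k3))) := by ring_nf
        -- move to the center and apply φ
        have E : (⟨(u * v) ^ k3, hw⟩ : ↥(center G)) ^ (N * (k1 * k2)) =
            (⟨u ^ k1, hu1⟩ : ↥(center G)) ^ (N * (k2 * k3)) * (⟨v ^ k2, hv1⟩ : ↥(center G)) ^ (N * (k1 * k3)) := by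
          apply Subtype.ext
          push_cast
          exact e2
        have := congrArg φ E
        rw [φmul, φpow, φpow, φpow] at this
        have hpos : 0 < (N * (k1 * k2)) • φ ⟨(u * v) ^ k3, hw⟩ := by
          rw [this]
          have p1 : 0 < (N * (k2 * k3)) • φ (⟨u ^ k1, hu1⟩ : ↥(center G)) :=
            nsmul_pos hφu (by positivity : 0 < N * (k2 * k3)).ne'
          have p2 : 0 < (N * (k1 * k3)) • φ (⟨v ^ k2, hv1⟩ : ↥(center G)) :=
            nsmul_pos hφv (by positivity : 0 < N * (k1 * k3)).ne'
          exact add_pos p1 p2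
        by_contra hle
        push_neg at hle
        have : (N * (k1 * k2)) • φ (⟨(u * v) ^ k3, hw⟩ : ↥(center G)) ≤ 0 := by
          calc (N * (k1 * k2)) • φ (⟨(u * v) ^ k3, hw⟩ : ↥(center G)) ≤ (N * (k1 * k2)) • (0 : L) :=
              nsmul_le_nsmul_right hle _
            _ = 0 := smul_zero _
        exact absurd hpos (not_lt.mpr this)
    · -- conjugation invariance
      rintro g b (hg | ⟨k, hk, h1, hφ⟩)
      · refine Or.inl ?_
        have : π (b * g * b⁻¹) = π b * π g * (π b)⁻¹ := by
          rw [map_mul, map_mul, map_inv]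
        rw [this]
        exact qconj _ _ hg
      · refine Or.inr ⟨k, hk, ?_⟩
        have e : (b * g * b⁻¹) ^ k = g ^ k := by
          rw [conj_pow]
          have := (Subgroup.mem_center_iff.mp h1 b).symm
          rw [← this, mul_assoc, mul_inv_cancel, mul_one]
        rw [e]
        exact ⟨h1, hφ⟩
    · -- pos → not torsion
      rintro g (hg | ⟨k, hk, h1, hφ⟩) hfin
      · exact qfin _ hg (π.isOfFinOrder hfin)
      · have : IsOfFinOrder ((⟨g ^ k, h1⟩ : ↥(center G))) :=
          Submonoid.isOfFinOrder_coe.mp (hfin.pow)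
        rw [← φker _] at this
        rw [this] at hφ
        exact lt_irrefl _ hφ
    · -- asymmetry
      rintro g (hg | ⟨k, hk, h1, hφ⟩) (hg' | ⟨j, hj, h2, hφ'⟩)
      · have : π g⁻¹ = (π g)⁻¹ := map_inv _ _
        rw [this] at hg'
        exact qasym _ hg hg'
      · exact qfin _ hg (by
          have := πfin g⁻¹ j hj h2
          rwa [map_inv, isOfFinOrder_inv_iff] at this)
      · exact qfin _ hg' (by
          have := πfin g k hk h1
          rw [map_inv]
          exact this.inv)
      · -- two central powers of opposite signs
        have h3 : g ^ (k * j) ∈ (center G) := by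
          rw [pow_mul]
          exact Subgroup.pow_mem _ h1 j
        have e1 : (⟨g ^ k, h1⟩ : ↥(center G)) ^ j = (⟨g ^ (k * j), h3⟩ : ↥(center G)) := by
          apply Subtype.ext
          push_cast
          rw [← pow_mul]
        have a1 : 0 < φ (⟨g ^ (k * j), h3⟩ : ↥(center G)) := by
          have := nsmul_pos hφ hj.ne'
          rw [← φpow, e1] at this
          exact this
        have h4 : g⁻¹ ^ (j * k) ∈ (center G) := by
          rw [pow_mul]
          exact Subgroup.pow_mem _ h2 k
        have e2 : (⟨g⁻¹ ^ (j * k), h4⟩ : ↥(center G)) = (⟨g ^ (k * j), h3⟩ : ↥(center G))⁻¹ := by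
          apply Subtype.ext
          push_cast
          rw [inv_pow, Nat.mul_comm j k]
        have a2 : 0 < φ (⟨g⁻¹ ^ (j * k), h4⟩ : ↥(center G)) := by
          have := nsmul_pos hφ' hk.ne'
          rw [← φpow] at this
          have e3 : (⟨g⁻¹ ^ j, h2⟩ : ↥(center G)) ^ k = (⟨g⁻¹ ^ (j * k), h4⟩ : ↥(center G)) := by
            apply Subtype.ext
            push_cast
            rw [← pow_mul]
          rw [e3] at this
          exact this
        rw [e2, φinv] at a2
        exact absurd a1 (not_lt.mpr (neg_pos.mp a2).le)
    · -- totality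
      intro g
      rcases qtot (π g) with h | h | h
      · exact Or.inl (Or.inl h)
      · refine Or.inr (Or.inl ?_)
        refine Or.inl ?_
        rwa [map_inv]
      · obtain ⟨k, hk, hkeq⟩ := h.exists_pow_eq_one
        have h1 : g ^ k ∈ (center G) := by
          have h5 := hkeq
          rw [← map_pow] at h5
          exact (QuotientGroup.eq_one_iff _).mp h5
        rcases lt_trichotomy (φ ⟨g ^ k, h1⟩) 0 with hlt | heq | hgt
        · refine Or.inr (Or.inl (Or.inr ⟨k, hk, ?_⟩))
          have h2 : g⁻¹ ^ k ∈ (center G) := by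
            rw [inv_pow]
            exact (center G).inv_mem h1
          refine ⟨h2, ?_⟩
          have e : (⟨g⁻¹ ^ k, h2⟩ : ↥(center G)) = (⟨g ^ k, h1⟩ : ↥(center G))⁻¹ := by
            apply Subtype.ext
            push_cast
            rw [inv_pow]
          rw [e, φinv]
          exact neg_pos.mpr hlt
        · refine Or.inr (Or.inr ?_)
          have : IsOfFinOrder ((⟨g ^ k, h1⟩ : ↥(center G))) := (φker _).mp heq
          have h2 : IsOfFinOrder (g ^ k) := Submonoid.isOfFinOrder_coe.mpr this
          exact h2.of_pow hk.ne'
        · exact Or.inl (Or.inr ⟨k, hk, h1, hgt⟩)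
    · -- torsion closed under multiplication
      intro a b ha hb
      have hTa : (π a) ∈ T := π.isOfFinOrder ha
      have hTb : (π b) ∈ T := π.isOfFinOrder hb
      obtain ⟨N, hN, hsplit, hcomm⟩ := exists_pow_mul_eq a b T hTt hTa hTb
      have : IsOfFinOrder ((a * b) ^ N) := by
        rw [hsplit]
        exact hcomm.isOfFinOrder_mul ha.pow hb.pow
      exact this.of_pow hN.ne'


/-- Every finitely generated torsion-free nilpotent group is left-orderable,
indeed bi-orderable: it carries a strict total order invariant under both
left and right multiplication. -/
theorem stmt_7 {G : Type*} [Group G] (hfg : Group.FG G)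
    (hnil : Group.IsNilpotent G) (htf : Monoid.IsTorsionFree G) :
    ∃ r : G → G → Prop, IsStrictTotalOrder G r ∧
      (∀ a b c : G, r a b → r (c * a) (c * b)) ∧
      (∀ a b c : G, r a b → r (a * c) (b * c)) := by
  haveI := hnil
  obtain ⟨pos, hmul, hconj, hfin, hasym, htot, -⟩ :=
    goodOrder_of_nilpotent (Group.nilpotencyClass G) G le_rfl
  refine ⟨fun a b => pos (b * a⁻¹), { trichotomous := ?_, irrefl := ?_, trans := ?_ }, ?_, ?_⟩
  · intro a b hab hba
    by_contra h
    have h1 : b * a⁻¹ ≠ 1 := fun hc => h (mul_inv_eq_one.mp hc).symm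
    rcases htot (b * a⁻¹) with hp | hp | hp
    · exact hab hp
    · have e : (b * a⁻¹)⁻¹ = a * b⁻¹ := by group
      rw [e] at hp
      exact hba hp
    · exact absurd hp (htf _ h1)
  · intro a ha
    have e : a * a⁻¹ = 1 := mul_inv_cancel a
    rw [e] at ha
    exact hfin 1 ha IsOfFinOrder.one
  · intro a b c hab hbc
    have := hmul _ _ hbc hab
    rwa [show c * b⁻¹ * (b * a⁻¹) = c * a⁻¹ by group] at this
  · intro a b c h
    have := hconj _ c h
    rwa [show c * (b * a⁻¹) * c⁻¹ = c * b * (c * a)⁻¹ by group] at this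
  · intro a b c h
    have e : b * c * (a * c)⁻¹ = b * a⁻¹ := by group
    rw [e]; exact h
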